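/- Fix σ > 0, M ≥ 1, ν ∈ [0,1], and probability simplex weights ω₁, …, ω_M (ω_i ≥ 0, Σ_i ω_i = 1). For each i = 1, …, M let N_i ≥ 1, let K_i be an N_i×N_i real positive semidefinite matrix, let k_i ∈ ℝ^{N_i} be a vector with every entry of absolute value at most 1, and let ȳ_i, ỹ_i, f̄_i, f̃_i ∈ ℝ^{N_i} be vectors satisfying ‖ȳ_i − f̄_i‖₂ ≤ √N_i · a_i, ‖ỹ_i − f̃_i‖₂ ≤ √N_i · a_i for some a_i ≥ 0, and |f̄_{i,j} − f̃_{i,j}| ≤ d_i for all j and some d_i ≥ 0. Then ν·|Σ_{i=1}^M ω_i · k_iᵀ(K_i + σ²·I)⁻¹(ȳ_i − ỹ_i)| ≤ ν·Σ_{i=1}^M ω_i · (N_i/σ²)·(2a_i + d_i). -/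

import Mathlib

open Matrix

private lemma cs_abs {n : ℕ} (u v : Fin n → ℝ) :
    |u ⬝ᵥ v| ≤ Real.sqrt (∑ j, u j ^ 2) * Real.sqrt (∑ j, v j ^ 2) := by
  rw [abs_le]
  refine ⟨?_, by simpa [dotProduct] using Real.sum_mul_le_sqrt_mul_sqrt Finset.univ u v⟩
  have h2 : -(u ⬝ᵥ v) ≤ Real.sqrt (∑ j, u j ^ 2) * Real.sqrt (∑ j, v j ^ 2) := by
    calc -(u ⬝ᵥ v) = ∑ j, (-u j) * v j := by simp [dotProduct]
      _ ≤ Real.sqrt (∑ j, (-u j) ^ 2) * Real.sqrt (∑ j, v j ^ 2) :=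
          Real.sum_mul_le_sqrt_mul_sqrt _ _ _
      _ = Real.sqrt (∑ j, u j ^ 2) * Real.sqrt (∑ j, v j ^ 2) := by simp
  linarith

private lemma key_bound (σ : ℝ) (hσ : 0 < σ) (n : ℕ)
    (K : Matrix (Fin n) (Fin n) ℝ) (hK : K.PosSemidef)
    (k v : Fin n → ℝ) (hk : ∀ j, |k j| ≤ 1) (C : ℝ) (hC : 0 ≤ C)
    (hv : Real.sqrt (∑ j, v j ^ 2) ≤ Real.sqrt n * C) :
    |k ⬝ᵥ ((K + σ ^ 2 • (1 : Matrix (Fin n) (Fin n) ℝ))⁻¹ *ᵥ v)| ≤ (n / σ ^ 2) * C := by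
  set A := K + σ ^ 2 • (1 : Matrix (Fin n) (Fin n) ℝ) with hA
  have hId : (σ ^ 2 • (1 : Matrix (Fin n) (Fin n) ℝ)).PosDef := by
    have := Matrix.posDef_diagonal_iff (d := fun _ : Fin n => σ ^ 2) (R := ℝ)
    have hd : (Matrix.diagonal fun _ : Fin n => σ ^ 2).PosDef := this.mpr (fun _ => by positivity)
    simpa [Matrix.smul_one_eq_diagonal] using hd
  have hApd : A.PosDef := Matrix.PosDef.posSemidef_add hK hId
  set u := A⁻¹ *ᵥ v with hu
  have hAu : A *ᵥ u = v := by
    rw [hu, Matrix.mulVec_mulVec, Matrix.mul_nonsing_inv _ hApd.det_pos.ne'.isUnit, one_mulVec]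
  set s := Real.sqrt (∑ j, u j ^ 2) with hs_def
  set t := Real.sqrt (∑ j, v j ^ 2) with ht_def
  have hs : 0 ≤ s := Real.sqrt_nonneg _
  have ht : 0 ≤ t := Real.sqrt_nonneg _
  have hs2 : s ^ 2 = ∑ j, u j ^ 2 := Real.sq_sqrt (by positivity)
  have hquad : σ ^ 2 * s ^ 2 ≤ u ⬝ᵥ v := by
    have hKnn : 0 ≤ u ⬝ᵥ (K *ᵥ u) := by simpa using hK.dotProduct_mulVec_nonneg u
    have hexp : u ⬝ᵥ (A *ᵥ u) = u ⬝ᵥ (K *ᵥ u) + σ ^ 2 * (∑ j, u j ^ 2) := by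
      simp only [hA, Matrix.add_mulVec, Matrix.smul_mulVec, Matrix.one_mulVec,
        dotProduct_add, dotProduct_smul, dotProduct, smul_eq_mul, sq, Finset.mul_sum,
        Pi.smul_apply]
      rw [← Finset.sum_add_distrib]
      apply Finset.sum_congr rfl
      intro j _
      simp only [Pi.add_apply, Pi.smul_apply, smul_eq_mul]
      ring
    rw [← hAu, hexp, hs2]
    linarith
  have hcs : u ⬝ᵥ v ≤ s * t := le_trans (le_abs_self _) (cs_abs u v)
  have hst : σ ^ 2 * s ≤ t := by
    rcases eq_or_lt_of_le hs with h0 | h0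
    · rw [← h0, mul_zero]; exact ht
    · nlinarith
  have hsle : s ≤ t / σ ^ 2 := by
    rw [le_div_iff₀ (by positivity)]
    linarith [hst]
  have hknorm : Real.sqrt (∑ j, k j ^ 2) ≤ Real.sqrt n := by
    apply Real.sqrt_le_sqrt
    calc (∑ j, k j ^ 2) ≤ ∑ _j : Fin n, (1 : ℝ) := by
          refine Finset.sum_le_sum fun j _ => ?_
          have := hk j
          nlinarith [abs_nonneg (k j), sq_abs (k j)]
      _ = n := by simp
  have hfinal : |k ⬝ᵥ u| ≤ Real.sqrt n * s :=
    le_trans (cs_abs k u) (mul_le_mul_of_nonneg_right hknorm hs)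
  have hsqn : Real.sqrt n * Real.sqrt n = (n : ℝ) := Real.mul_self_sqrt (by positivity)
  have htC : t ≤ Real.sqrt n * C := hv
  have hsn : (0:ℝ) ≤ Real.sqrt n := Real.sqrt_nonneg _
  calc |k ⬝ᵥ u| ≤ Real.sqrt n * s := hfinal
    _ ≤ Real.sqrt n * (t / σ ^ 2) := mul_le_mul_of_nonneg_left hsle hsn
    _ ≤ Real.sqrt n * (Real.sqrt n * C / σ ^ 2) := by
        exact mul_le_mul_of_nonneg_left (div_le_div_of_nonneg_right htC (by positivity)) hsn
    _ = (n / σ ^ 2) * C := by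
        field_simp
        nlinarith [hsqn]


private lemma nrm_tri {n : ℕ} (x y : Fin n → ℝ) :
    Real.sqrt (∑ j, (x j + y j) ^ 2) ≤
      Real.sqrt (∑ j, x j ^ 2) + Real.sqrt (∑ j, y j ^ 2) := by
  set A := Real.sqrt (∑ j, x j ^ 2) with hA
  set B := Real.sqrt (∑ j, y j ^ 2) with hB
  have hA2 : A ^ 2 = ∑ j, x j ^ 2 := Real.sq_sqrt (by positivity)
  have hB2 : B ^ 2 = ∑ j, y j ^ 2 := Real.sq_sqrt (by positivity)
  have hcs : ∑ j, x j * y j ≤ A * B := Real.sum_mul_le_sqrt_mul_sqrt Finset.univ x y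
  have hsum : ∑ j, (x j + y j) ^ 2 ≤ (A + B) ^ 2 := by
    have hexp : ∑ j, (x j + y j) ^ 2
        = (∑ j, x j ^ 2) + 2 * (∑ j, x j * y j) + ∑ j, y j ^ 2 := by
      rw [Finset.mul_sum, ← Finset.sum_add_distrib, ← Finset.sum_add_distrib]
      apply Finset.sum_congr rfl
      intro j _
      ring
    rw [hexp]
    nlinarith
  calc Real.sqrt (∑ j, (x j + y j) ^ 2) ≤ Real.sqrt ((A + B) ^ 2) := Real.sqrt_le_sqrt hsum
    _ = A + B := Real.sqrt_sq (by positivity)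

private lemma tri_bound {n : ℕ} (ybar ytil fbar ftil : Fin n → ℝ) (a d : ℝ)
    (ha : 0 ≤ a) (hd : 0 ≤ d)
    (h1 : Real.sqrt (∑ j, (ybar j - fbar j) ^ 2) ≤ Real.sqrt n * a)
    (h2 : Real.sqrt (∑ j, (ytil j - ftil j) ^ 2) ≤ Real.sqrt n * a)
    (h3 : ∀ j, |fbar j - ftil j| ≤ d) :
    Real.sqrt (∑ j, (ybar j - ytil j) ^ 2) ≤ Real.sqrt n * (2 * a + d) := by
  have hmid : Real.sqrt (∑ j, (fbar j - ftil j) ^ 2) ≤ Real.sqrt n * d := by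
    have hle : (∑ j, (fbar j - ftil j) ^ 2) ≤ (n : ℝ) * d ^ 2 := by
      calc (∑ j, (fbar j - ftil j) ^ 2) ≤ ∑ _j : Fin n, d ^ 2 := by
            refine Finset.sum_le_sum fun j _ => ?_
            have := h3 j
            nlinarith [abs_nonneg (fbar j - ftil j), sq_abs (fbar j - ftil j)]
        _ = (n : ℝ) * d ^ 2 := by simp [mul_comm]
    calc Real.sqrt (∑ j, (fbar j - ftil j) ^ 2) ≤ Real.sqrt ((n : ℝ) * d ^ 2) :=
          Real.sqrt_le_sqrt hle
      _ = Real.sqrt n * d := by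
          rw [Real.sqrt_mul (by positivity), Real.sqrt_sq hd]
  have h2' : Real.sqrt (∑ j, (ftil j - ytil j) ^ 2) ≤ Real.sqrt n * a := by
    have : (∑ j, (ftil j - ytil j) ^ 2) = ∑ j, (ytil j - ftil j) ^ 2 := by
      apply Finset.sum_congr rfl; intro j _; ring
    rw [this]; exact h2
  have key : Real.sqrt (∑ j, ((ybar j - fbar j) + ((fbar j - ftil j) + (ftil j - ytil j))) ^ 2)
      ≤ Real.sqrt (∑ j, (ybar j - fbar j) ^ 2) +
        (Real.sqrt (∑ j, (fbar j - ftil j) ^ 2) + Real.sqrt (∑ j, (ftil j - ytil j) ^ 2)) := by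
    refine le_trans (nrm_tri _ _) ?_
    exact add_le_add le_rfl (nrm_tri _ _)
  have heq : (∑ j, ((ybar j - fbar j) + ((fbar j - ftil j) + (ftil j - ytil j))) ^ 2)
      = ∑ j, (ybar j - ytil j) ^ 2 := by
    apply Finset.sum_congr rfl; intro j _; ring_nf
  rw [heq] at key
  calc Real.sqrt (∑ j, (ybar j - ytil j) ^ 2)
      ≤ Real.sqrt n * a + (Real.sqrt n * d + Real.sqrt n * a) := by
        refine le_trans key ?_
        exact add_le_add h1 (add_le_add hmid h2')
    _ = Real.sqrt n * (2 * a + d) := by ring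

/-- The deterministic core of Lemma 3 (ucb_diff): a bound on the weighted
combination of quadratic forms `k_iᵀ (K_i + σ²I)⁻¹ (ȳ_i − ỹ_i)`. -/
theorem stmt_5 (σ : ℝ) (hσ : 0 < σ) (M : ℕ) (hM : 1 ≤ M)
    (ν : ℝ) (hν : ν ∈ Set.Icc (0 : ℝ) 1)
    (ω : Fin M → ℝ) (hω : ∀ i, 0 ≤ ω i) (hωsum : ∑ i, ω i = 1)
    (Nn : Fin M → ℕ) (hNn : ∀ i, 1 ≤ Nn i)
    (K : ∀ i, Matrix (Fin (Nn i)) (Fin (Nn i)) ℝ) (hK : ∀ i, (K i).PosSemidef)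
    (k : ∀ i, Fin (Nn i) → ℝ) (hk : ∀ i j, |k i j| ≤ 1)
    (ybar ytil fbar ftil : ∀ i, Fin (Nn i) → ℝ)
    (a d : Fin M → ℝ) (ha : ∀ i, 0 ≤ a i) (hd : ∀ i, 0 ≤ d i)
    (hybar : ∀ i, Real.sqrt (∑ j, (ybar i j - fbar i j) ^ 2) ≤ Real.sqrt (Nn i) * a i)
    (hytil : ∀ i, Real.sqrt (∑ j, (ytil i j - ftil i j) ^ 2) ≤ Real.sqrt (Nn i) * a i)
    (hgap : ∀ i j, |fbar i j - ftil i j| ≤ d i) :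
    ν * |(∑ i, ω i *
        (k i ⬝ᵥ ((K i + σ ^ 2 • (1 : Matrix (Fin (Nn i)) (Fin (Nn i)) ℝ))⁻¹ *ᵥ
          (ybar i - ytil i))))| ≤
      ν * ∑ i, ω i * ((Nn i : ℝ) / σ ^ 2) * (2 * a i + d i) := by
  have hbound : ∀ i, |k i ⬝ᵥ ((K i + σ ^ 2 • (1 : Matrix (Fin (Nn i)) (Fin (Nn i)) ℝ))⁻¹ *ᵥ
      (ybar i - ytil i))| ≤ ((Nn i : ℝ) / σ ^ 2) * (2 * a i + d i) := by
    intro i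
    have hv : Real.sqrt (∑ j, (ybar i - ytil i) j ^ 2) ≤ Real.sqrt (Nn i) * (2 * a i + d i) := by
      have := tri_bound (ybar i) (ytil i) (fbar i) (ftil i) (a i) (d i)
        (ha i) (hd i) (hybar i) (hytil i) (hgap i)
      simpa using this
    exact key_bound σ hσ (Nn i) (K i) (hK i) (k i) (ybar i - ytil i) (hk i)
      (2 * a i + d i) (by have := ha i; have := hd i; linarith) hv
  have habs : |(∑ i, ω i *
      (k i ⬝ᵥ ((K i + σ ^ 2 • (1 : Matrix (Fin (Nn i)) (Fin (Nn i)) ℝ))⁻¹ *ᵥ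
        (ybar i - ytil i))))| ≤ ∑ i, ω i * ((Nn i : ℝ) / σ ^ 2) * (2 * a i + d i) := by
    refine le_trans (Finset.abs_sum_le_sum_abs _ _) ?_
    refine Finset.sum_le_sum fun i _ => ?_
    rw [abs_mul, abs_of_nonneg (hω i), mul_assoc]
    exact mul_le_mul_of_nonneg_left (hbound i) (hω i)
  exact mul_le_mul_of_nonneg_left habs hν.1
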